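/- Let $\mathcal{R}$ be an algebraic Kähler curvature tensor on $\mathbb{C}^n$, $n \geq 2$, and let $S = \sum_{i,j=1}^n \mathcal{R}(e_i,\bar e_i,e_j,\bar e_j)$ denote its scalar curvature with respect to the standard orthonormal basis (a quantity independent of the choice of unitary frame). Then $S = \frac{n(n+1)}{2} \int_{U(n)} \mathcal{R}(f_1,\bar f_1,f_1,\bar f_1)\,d\nu(\mathfrak{u})$, where $f_1$ is the first vector of the frame obtained by applying $\mathfrak{u} \in U(n)$ to the standard basis and $\nu$ is Haar probability measure. -/

import Mathlib

open Finset

noncomputable section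

/-- An algebraic Kähler curvature tensor on `ℂⁿ`: complex linear in the first and
third (unbarred) slots, conjugate linear in the second and fourth (barred) slots,
with the pair symmetry `R(X,Ȳ,Z,W̄) = R(Z,W̄,X,Ȳ)`, the Kähler symmetry
`R(X,Ȳ,Z,W̄) = R(Z,Ȳ,X,W̄)`, and the reality condition
`conj R(X,Ȳ,Z,W̄) = R(Y,X̄,W,Z̄)`. -/
structure AKCT (n : ℕ) where
  R : (Fin n → ℂ) → (Fin n → ℂ) → (Fin n → ℂ) → (Fin n → ℂ) → ℂ
  smul_fst : ∀ (a : ℂ) (X Y Z W), R (a • X) Y Z W = a * R X Y Z W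
  add_fst : ∀ (X X' Y Z W), R (X + X') Y Z W = R X Y Z W + R X' Y Z W
  smul_snd : ∀ (a : ℂ) (X Y Z W), R X (a • Y) Z W = (starRingEnd ℂ) a * R X Y Z W
  add_snd : ∀ (X Y Y' Z W), R X (Y + Y') Z W = R X Y Z W + R X Y' Z W
  pair_symm : ∀ (X Y Z W), R X Y Z W = R Z W X Y
  kahler_symm : ∀ (X Y Z W), R X Y Z W = R Z Y X W
  conj_symm : ∀ (X Y Z W), (starRingEnd ℂ) (R X Y Z W) = R Y X W Z

/-- The standard Hermitian inner product on `ℂⁿ` (conjugate linear in the first slot). -/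
def hermInner {n : ℕ} (v w : Fin n → ℂ) : ℂ := ∑ k, (starRingEnd ℂ) (v k) * w k

/-- A unitary frame of `ℂⁿ`. -/
def UnitaryFrame {n : ℕ} (e : Fin n → Fin n → ℂ) : Prop :=
  ∀ i j, hermInner (e i) (e j) = if i = j then 1 else 0

/-- An orthonormal (unitary) pair of vectors in `ℂⁿ`. -/
def OrthPair {n : ℕ} (V W : Fin n → ℂ) : Prop :=
  hermInner V V = 1 ∧ hermInner W W = 1 ∧ hermInner V W = 0

/-- Nonnegative quadratic orthogonal bisectional curvature. -/
def NQOBC {n : ℕ} (𝓡 : AKCT n) : Prop :=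
  ∀ e : Fin n → Fin n → ℂ, UnitaryFrame e →
    ∀ ξ : Fin n → ℝ,
      0 ≤ ∑ i, ∑ j, (𝓡.R (e i) (e i) (e j) (e j)).re * (ξ i - ξ j) ^ 2

/-- The `k`-th standard basis vector of `ℂⁿ`. -/
def stdVec {n : ℕ} (k : Fin n) : Fin n → ℂ := fun m => if m = k then 1 else 0

/-- The scalar curvature of an algebraic Kähler curvature tensor
(computed in the standard basis). -/
def scalarCurv {n : ℕ} (𝓡 : AKCT n) : ℝ :=
  ∑ i, ∑ j, (𝓡.R (stdVec i) (stdVec i) (stdVec j) (stdVec j)).re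

end

noncomputable section

open MeasureTheory

/-- The unitary frame obtained by applying `u ∈ U(n)` to the standard basis:
`f_j = ∑_k u_{kj} e_k`, i.e. the `j`-th column of `u`. -/
def uFrame {n : ℕ} (u : Matrix.unitaryGroup (Fin n) ℂ) : Fin n → Fin n → ℂ :=
  fun j m => (u : Matrix (Fin n) (Fin n) ℂ) m j

set_option linter.unusedSectionVars false

noncomputable section
namespace Stmt9Aux

variable {n : ℕ}

/-- entry `m` of column `z` of a unitary matrix -/
def col (z : Fin n) (u : Matrix.unitaryGroup (Fin n) ℂ) : Fin n → ℂ :=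
  fun m => (u : Matrix (Fin n) (Fin n) ℂ) m z

/-- the basic monomial in column entries -/
def mono (z i j k l : Fin n) (u : Matrix.unitaryGroup (Fin n) ℂ) : ℂ :=
  col z u i * (starRingEnd ℂ) (col z u j) * (col z u k * (starRingEnd ℂ) (col z u l))

lemma col_continuous (z m : Fin n) : Continuous (fun u => col z u m) :=
  (continuous_apply z).comp ((continuous_apply m).comp continuous_subtype_val)

lemma mono_continuous (z i j k l : Fin n) : Continuous (mono z i j k l) := by
  unfold mono
  exact ((col_continuous z i).mul ((col_continuous z j).star)).mul
    ((col_continuous z k).mul ((col_continuous z l).star))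

lemma col_normalized (z : Fin n) (u : Matrix.unitaryGroup (Fin n) ℂ) :
    ∑ m, col z u m * (starRingEnd ℂ) (col z u m) = 1 := by
  have h := Matrix.UnitaryGroup.star_mul_self u
  have h2 := congrFun (congrFun h z) z
  simp only [Matrix.mul_apply, Matrix.star_apply, Matrix.one_apply_eq] at h2
  rw [← h2]
  refine Finset.sum_congr rfl fun m _ => ?_
  simp [col, Matrix.star_eq_conjTranspose, Matrix.conjTranspose_apply]
  ring

lemma norm_col_le (z : Fin n) (u : Matrix.unitaryGroup (Fin n) ℂ) (m : Fin n) :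
    ‖col z u m‖ ≤ 1 := by
  have h := col_normalized z u
  have h2 : ∑ p, Complex.normSq (col z u p) = 1 := by
    have := congrArg Complex.re h
    rw [Complex.re_sum] at this
    simpa [Complex.mul_conj] using this
  have h3 : Complex.normSq (col z u m) ≤ 1 := by
    rw [← h2]
    exact Finset.single_le_sum (fun p _ => Complex.normSq_nonneg _) (Finset.mem_univ m)
  have h4 : ‖col z u m‖ ^ 2 = Complex.normSq (col z u m) := by
    rw [Complex.sq_norm]
  nlinarith [norm_nonneg (col z u m)]

lemma norm_mono_le (z i j k l : Fin n) (u : Matrix.unitaryGroup (Fin n) ℂ) :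
    ‖mono z i j k l u‖ ≤ 1 := by
  have hi := norm_col_le z u i
  have hj := norm_col_le z u j
  have hk := norm_col_le z u k
  have hl := norm_col_le z u l
  have : ‖mono z i j k l u‖ = ‖col z u i‖ * ‖col z u j‖ * (‖col z u k‖ * ‖col z u l‖) := by
    simp [mono, norm_mul]
  rw [this]
  have n1 := norm_nonneg (col z u i); have n2 := norm_nonneg (col z u j)
  have n3 := norm_nonneg (col z u k); have n4 := norm_nonneg (col z u l)
  exact mul_le_one₀ (mul_le_one₀ hi n2 hj) (mul_nonneg n3 n4) (mul_le_one₀ hk n4 hl)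

section Meas
variable [MeasurableSpace (Matrix.unitaryGroup (Fin n) ℂ)]
  [BorelSpace (Matrix.unitaryGroup (Fin n) ℂ)]
  (ν : Measure (Matrix.unitaryGroup (Fin n) ℂ)) [IsProbabilityMeasure ν]
  [ν.IsMulLeftInvariant]

lemma mono_integrable (z i j k l : Fin n) : Integrable (mono z i j k l) ν :=
  (integrable_const (1:ℝ)).mono' (mono_continuous z i j k l).aestronglyMeasurable
    (Filter.Eventually.of_forall (norm_mono_le z i j k l))

/-- the fourth moment -/
def Mom (z i j k l : Fin n) : ℂ := ∫ u, mono z i j k l u ∂ν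

lemma col_mul (z : Fin n) (g u : Matrix.unitaryGroup (Fin n) ℂ) (m : Fin n) :
    col z (g * u) m = ∑ p, (g : Matrix (Fin n) (Fin n) ℂ) m p * col z u p := by
  simp [col, Matrix.UnitaryGroup.mul_apply, Matrix.mul_apply]

lemma Mom_invariant (z i j k l : Fin n) (g : Matrix.unitaryGroup (Fin n) ℂ) :
    ∫ u, mono z i j k l (g * u) ∂ν = Mom ν z i j k l :=
  integral_mul_left_eq_self (mono z i j k l) g

/-- the phase unitary -/
def phaseg (p : Fin n) : Matrix.unitaryGroup (Fin n) ℂ :=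
  ⟨Matrix.diagonal (fun m => if m = p then Complex.I else 1), by
    rw [Matrix.mem_unitaryGroup_iff, Matrix.star_eq_conjTranspose,
      Matrix.diagonal_conjTranspose, Matrix.diagonal_mul_diagonal]
    rw [show (fun i => (if i = p then Complex.I else 1) *
        (star fun m => if m = p then Complex.I else 1) i) = fun _ => (1:ℂ) from ?_,
      Matrix.diagonal_one]
    funext m
    by_cases h : m = p <;>
      simp [h, Pi.star_apply, Complex.star_def, Complex.conj_I, mul_neg, Complex.I_mul_I]⟩

lemma col_phaseg (z p : Fin n) (u : Matrix.unitaryGroup (Fin n) ℂ) (m : Fin n) :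
    col z (phaseg p * u) m = (if m = p then Complex.I else 1) * col z u m := by
  simp [col, Matrix.UnitaryGroup.mul_apply, phaseg, Matrix.diagonal_mul]

lemma Mom_phase (z p i j k l : Fin n) :
    Mom ν z i j k l =
      ((if i = p then Complex.I else 1) * (starRingEnd ℂ) (if j = p then Complex.I else 1) *
        ((if k = p then Complex.I else 1) * (starRingEnd ℂ) (if l = p then Complex.I else 1))) *
      Mom ν z i j k l := by
  conv_lhs => rw [← Mom_invariant ν z i j k l (phaseg p)]
  have : ∀ u, mono z i j k l (phaseg p * u) =
      ((if i = p then Complex.I else 1) * (starRingEnd ℂ) (if j = p then Complex.I else 1) *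
        ((if k = p then Complex.I else 1) * (starRingEnd ℂ) (if l = p then Complex.I else 1))) *
      mono z i j k l u := by
    intro u
    simp only [mono, col_phaseg, map_mul]
    ring
  simp_rw [this]
  rw [integral_const_mul]
  rfl

lemma cancel_factor {m c : ℂ} (h : m = c * m) (hc : c ≠ 1) : m = 0 := by
  have h2 : (1 - c) * m = 0 := by linear_combination h
  rcases mul_eq_zero.mp h2 with h' | h'
  · exact absurd (sub_eq_zero.mp h').symm hc
  · exact h'

lemma Mom_zero (z i j k l : Fin n) (h : ¬((i = j ∧ k = l) ∨ (i = l ∧ j = k))) :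
    Mom ν z i j k l = 0 := by
  have hI : Complex.I ≠ 1 := by
    intro hc; simpa using congrArg Complex.im hc
  have hnI : -Complex.I ≠ 1 := by
    intro hc; simpa using congrArg Complex.im hc
  have hm1 : (-1 : ℂ) ≠ 1 := by norm_num
  by_cases hij : i = j
  · have hkl : k ≠ l := fun hkl => h (Or.inl ⟨hij, hkl⟩)
    have hphase := Mom_phase ν z k i j k l
    refine cancel_factor hphase ?_
    subst hij
    rcases eq_or_ne i k with rfl | hik
    · simp [hkl, Ne.symm hkl, Complex.conj_I, hI]
    · simp [hkl, Ne.symm hkl, hik, Complex.conj_I, hI]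
  · by_cases hil : i = l
    · have hjk : j ≠ k := fun hjk => h (Or.inr ⟨hil, hjk⟩)
      have hphase := Mom_phase ν z j i j k l
      refine cancel_factor hphase ?_
      subst hil
      simp [hij, Ne.symm hjk, fun hh => hij (hh : i = j), Complex.conj_I, hnI]
    · have hphase := Mom_phase ν z i i j k l
      refine cancel_factor hphase ?_
      rcases eq_or_ne k i with rfl | hki
      · simp [Ne.symm hij, Ne.symm hil, Complex.I_mul_I, hm1]
      · simp [Ne.symm hij, Ne.symm hil, hki, hI]

/-- the permutation unitary: column `q` has a `1` in row `σ q` -/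
def permg (σ : Equiv.Perm (Fin n)) : Matrix.unitaryGroup (Fin n) ℂ :=
  ⟨Matrix.of fun m q => if σ q = m then 1 else 0, by
    rw [Matrix.mem_unitaryGroup_iff]
    ext a b
    simp only [Matrix.mul_apply, Matrix.star_apply, Matrix.of_apply, apply_ite (star : ℂ → ℂ),
      star_one, star_zero]
    rw [Fintype.sum_equiv σ
      (fun x => (if σ x = a then 1 else 0 : ℂ) * if σ x = b then 1 else 0)
      (fun q => (if q = a then 1 else 0 : ℂ) * if q = b then 1 else 0)
      (fun x => rfl)]
    simp only [ite_mul, one_mul, zero_mul, Finset.sum_ite_eq', Finset.mem_univ, if_true]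
    by_cases hab : a = b <;> simp [Matrix.one_apply, hab]⟩

lemma col_permg (z : Fin n) (σ : Equiv.Perm (Fin n)) (u : Matrix.unitaryGroup (Fin n) ℂ)
    (m : Fin n) : col z (permg σ * u) m = col z u (σ.symm m) := by
  rw [col_mul]
  simp only [permg, Matrix.of_apply]
  calc ∑ p, (if σ p = m then (1:ℂ) else 0) * col z u p
      = ∑ p, if p = σ.symm m then col z u p else 0 :=
        Finset.sum_congr rfl fun p _ => by
          simp only [Equiv.apply_eq_iff_eq_symm_apply, ite_mul, one_mul, zero_mul]
    _ = col z u (σ.symm m) := by simp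

lemma Mom_perm (z : Fin n) (σ : Equiv.Perm (Fin n)) (i j k l : Fin n) :
    Mom ν z (σ i) (σ j) (σ k) (σ l) = Mom ν z i j k l := by
  conv_lhs => rw [← Mom_invariant ν z (σ i) (σ j) (σ k) (σ l) (permg σ)]
  refine integral_congr_ae (Filter.Eventually.of_forall fun u => ?_)
  simp [mono, col_permg]

end Meas

section Rot
variable {n : ℕ}

/-- `1/√2` as a complex number -/
def rc : ℂ := Complex.ofReal (Real.sqrt 2)⁻¹

lemma conj_rc : (starRingEnd ℂ) rc = rc := Complex.conj_ofReal _

lemma star_rc : star rc = rc := conj_rc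

lemma hr2 : rc * rc = 1/2 := by
  rw [rc, ← Complex.ofReal_mul, ← mul_inv, Real.mul_self_sqrt (by norm_num : (0:ℝ) ≤ 2)]
  norm_num

lemma sum_two {p q : Fin n} (hpq : p ≠ q) (f g : Fin n → ℂ) :
    ∑ m, (if m = p then f m else if m = q then g m else 0) = f p + g q := by
  rw [show (fun m => if m = p then f m else if m = q then g m else 0)
      = (fun m => (if m = p then f m else 0) + (if m = q then g m else 0)) from
    funext fun m => by split_ifs with h1 h2 <;> simp_all]
  rw [Finset.sum_add_distrib]
  simp [Finset.sum_ite_eq']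

lemma sum_two_mul {p q : Fin n} (hpq : p ≠ q) (c d : ℂ) (X : Fin n → ℂ) :
    ∑ m, (if m = p then c else if m = q then d else 0) * X m = c * X p + d * X q := by
  rw [show (fun m => (if m = p then c else if m = q then d else 0) * X m)
      = fun m => (if m = p then c * X m else if m = q then d * X m else 0) from
    funext fun m => by split_ifs <;> simp]
  exact sum_two hpq _ _

/-- the rotation matrix mixing coordinates `p` and `q` -/
def rmat (p q : Fin n) : Matrix (Fin n) (Fin n) ℂ :=
  Matrix.of fun row colm =>
    if row = p then (if colm = p then rc else if colm = q then rc else 0)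
    else if row = q then (if colm = p then rc else if colm = q then -rc else 0)
    else if colm = row then 1 else 0

lemma rmat_row_p (p q : Fin n) (m : Fin n) :
    rmat p q p m = if m = p then rc else if m = q then rc else 0 := by simp [rmat]

lemma rmat_row_q (p q : Fin n) (hpq : p ≠ q) (m : Fin n) :
    rmat p q q m = if m = p then rc else if m = q then -rc else 0 := by
  simp [rmat, Ne.symm hpq, hpq]

lemma rmat_row_other (p q : Fin n) (a : Fin n) (ha1 : a ≠ p) (ha2 : a ≠ q) (m : Fin n) :
    rmat p q a m = if m = a then 1 else 0 := by simp [rmat, ha1, ha2]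

def rotg (p q : Fin n) (hpq : p ≠ q) : Matrix.unitaryGroup (Fin n) ℂ :=
  ⟨rmat p q, by
    rw [Matrix.mem_unitaryGroup_iff]
    ext a b
    rw [Matrix.mul_apply]
    simp only [Matrix.star_apply]
    by_cases ha1 : a = p
    · rw [ha1]
      rw [Finset.sum_congr rfl fun m _ => by rw [rmat_row_p]]
      rw [sum_two_mul hpq rc rc _]
      by_cases hb1 : b = p
      · rw [hb1, rmat_row_p, rmat_row_p]
        simp [hpq, Ne.symm hpq, star_rc, star_neg, Matrix.one_apply]
        linear_combination 2 * hr2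
      · by_cases hb2 : b = q
        · rw [hb2, rmat_row_q p q hpq, rmat_row_q p q hpq]
          simp [hpq, Ne.symm hpq, star_rc, star_neg, Matrix.one_apply]
        · rw [rmat_row_other p q b hb1 hb2, rmat_row_other p q b hb1 hb2]
          have h1 : p ≠ b := fun h => hb1 h.symm
          have h2 : q ≠ b := fun h => hb2 h.symm
          simp [Matrix.one_apply, h1, h2]
    · by_cases ha2 : a = q
      · rw [ha2]
        rw [Finset.sum_congr rfl fun m _ => by rw [rmat_row_q p q hpq]]
        rw [sum_two_mul hpq rc (-rc) _]
        by_cases hb1 : b = p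
        · rw [hb1, rmat_row_p, rmat_row_p]
          simp [hpq, Ne.symm hpq, star_rc, star_neg, Matrix.one_apply]
        · by_cases hb2 : b = q
          · rw [hb2, rmat_row_q p q hpq, rmat_row_q p q hpq]
            simp [hpq, Ne.symm hpq, star_rc, star_neg, Matrix.one_apply]
            linear_combination 2 * hr2
          · rw [rmat_row_other p q b hb1 hb2, rmat_row_other p q b hb1 hb2]
            have h1 : p ≠ b := fun h => hb1 h.symm
            have h2 : q ≠ b := fun h => hb2 h.symm
            simp [Matrix.one_apply, h1, h2]
      · rw [Finset.sum_congr rfl fun m _ => by rw [rmat_row_other p q a ha1 ha2]]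
        simp only [ite_mul, one_mul, zero_mul, Finset.sum_ite_eq', Finset.mem_univ, if_true]
        by_cases hb1 : b = p
        · rw [hb1, rmat_row_p]
          simp [Matrix.one_apply, ha1, ha2]
        · by_cases hb2 : b = q
          · rw [hb2, rmat_row_q p q hpq]
            simp [Matrix.one_apply, ha1, ha2]
          · rw [rmat_row_other p q b hb1 hb2]
            by_cases hab : a = b <;> simp [Matrix.one_apply, hab, eq_comm]⟩

end Rot

section Meas2
variable {n : ℕ} [MeasurableSpace (Matrix.unitaryGroup (Fin n) ℂ)]
  [BorelSpace (Matrix.unitaryGroup (Fin n) ℂ)]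
  (ν : Measure (Matrix.unitaryGroup (Fin n) ℂ)) [IsProbabilityMeasure ν]
  [ν.IsMulLeftInvariant]

lemma col_rot (z p q : Fin n) (hpq : p ≠ q) (u : Matrix.unitaryGroup (Fin n) ℂ) :
    col z (rotg p q hpq * u) p = rc * col z u p + rc * col z u q := by
  rw [col_mul]
  have hcoe : ∀ m, ((rotg p q hpq : Matrix (Fin n) (Fin n) ℂ)) p m = rmat p q p m :=
    fun m => rfl
  rw [Finset.sum_congr rfl fun m _ => by rw [hcoe m, rmat_row_p]]
  exact sum_two_mul hpq rc rc _

lemma Mom_comm (z i k : Fin n) : Mom ν z i k k i = Mom ν z i i k k := by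
  unfold Mom
  refine integral_congr_ae (Filter.Eventually.of_forall fun u => ?_)
  simp only [mono]
  ring

lemma Mom_rot (z p q : Fin n) (hpq : p ≠ q) :
    Mom ν z p p p p = 2 * Mom ν z p p q q := by
  classical
  have hpt : ∀ u, mono z p p p p (rotg p q hpq * u) =
      (1/4 : ℂ) * ∑ t : Fin 2 × Fin 2 × Fin 2 × Fin 2,
        mono z (![p,q] t.1) (![p,q] t.2.1) (![p,q] t.2.2.1) (![p,q] t.2.2.2) u := by
    intro u
    simp only [Fintype.sum_prod_type, Fin.sum_univ_two, Matrix.cons_val_zero,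
      Matrix.cons_val_one, Matrix.head_cons]
    simp only [mono, col_rot, map_add, map_mul, conj_rc]
    linear_combination ((rc * rc + 1/2) *
      ((col z u p + col z u q) * ((starRingEnd ℂ) (col z u p) + (starRingEnd ℂ) (col z u q)) *
        ((col z u p + col z u q) *
          ((starRingEnd ℂ) (col z u p) + (starRingEnd ℂ) (col z u q))))) * hr2
  have hint : Mom ν z p p p p =
      (1/4 : ℂ) * ∑ t : Fin 2 × Fin 2 × Fin 2 × Fin 2,
        Mom ν z (![p,q] t.1) (![p,q] t.2.1) (![p,q] t.2.2.1) (![p,q] t.2.2.2) := by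
    conv_lhs => rw [← Mom_invariant ν z p p p p (rotg p q hpq)]
    rw [integral_congr_ae (Filter.Eventually.of_forall hpt), integral_const_mul,
      integral_finset_sum _ (fun t _ => mono_integrable ν z _ _ _ _)]
    rfl
  have hqqqq : Mom ν z q q q q = Mom ν z p p p p := by
    simpa [Equiv.swap_apply_left] using Mom_perm ν z (Equiv.swap p q) p p p p
  have hqqpp : Mom ν z q q p p = Mom ν z p p q q := by
    simpa [Equiv.swap_apply_left, Equiv.swap_apply_right]
      using Mom_perm ν z (Equiv.swap p q) p p q q
  have hpqqp : Mom ν z p q q p = Mom ν z p p q q := Mom_comm ν z p q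
  have hqppq : Mom ν z q p p q = Mom ν z q q p p := Mom_comm ν z q p
  have z1 : Mom ν z p p p q = 0 := Mom_zero ν z _ _ _ _ (by simp [hpq, Ne.symm hpq])
  have z2 : Mom ν z p p q p = 0 := Mom_zero ν z _ _ _ _ (by simp [hpq, Ne.symm hpq])
  have z3 : Mom ν z p q p p = 0 := Mom_zero ν z _ _ _ _ (by simp [hpq, Ne.symm hpq])
  have z4 : Mom ν z q p p p = 0 := Mom_zero ν z _ _ _ _ (by simp [hpq, Ne.symm hpq])
  have z5 : Mom ν z q q q p = 0 := Mom_zero ν z _ _ _ _ (by simp [hpq, Ne.symm hpq])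
  have z6 : Mom ν z q q p q = 0 := Mom_zero ν z _ _ _ _ (by simp [hpq, Ne.symm hpq])
  have z7 : Mom ν z q p q q = 0 := Mom_zero ν z _ _ _ _ (by simp [hpq, Ne.symm hpq])
  have z8 : Mom ν z p q q q = 0 := Mom_zero ν z _ _ _ _ (by simp [hpq, Ne.symm hpq])
  have z9 : Mom ν z p q p q = 0 := Mom_zero ν z _ _ _ _ (by simp [hpq, Ne.symm hpq])
  have z10 : Mom ν z q p q p = 0 := Mom_zero ν z _ _ _ _ (by simp [hpq, Ne.symm hpq])
  simp only [Fintype.sum_prod_type, Fin.sum_univ_two, Matrix.cons_val_zero,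
    Matrix.cons_val_one, Matrix.head_cons] at hint
  rw [hqqqq, hqqpp, hpqqp, hqppq, hqqpp, z1, z2, z3, z4, z5, z6, z7, z8, z9, z10] at hint
  linear_combination 2 * hint

lemma Mom_diag_eq (z i i' : Fin n) : Mom ν z i i i i = Mom ν z i' i' i' i' := by
  simpa [Equiv.swap_apply_left] using (Mom_perm ν z (Equiv.swap i i') i i i i).symm

lemma Mom_offdiag_eq (z : Fin n) {i k i' k' : Fin n} (hik : i ≠ k) (hik' : i' ≠ k') :
    Mom ν z i i k k = Mom ν z i' i' k' k' := by
  classical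
  set τ := Equiv.swap i i' with hτ
  have hτk : τ k ≠ i' := by
    by_cases h1 : k = i'
    · rcases eq_or_ne i i' with h2 | h2
      · exact absurd (h1.trans h2.symm) (Ne.symm hik)
      · rw [hτ, h1, Equiv.swap_apply_right]; exact h2
    · by_cases h2 : k = i
      · exact absurd h2 (Ne.symm hik)
      · rw [hτ, Equiv.swap_apply_of_ne_of_ne h2 h1]; exact h1
  set σ := τ.trans (Equiv.swap (τ k) k') with hσ
  have hσi : σ i = i' := by
    rw [hσ]
    simp only [Equiv.trans_apply, hτ, Equiv.swap_apply_left]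
    exact Equiv.swap_apply_of_ne_of_ne (Ne.symm hτk) hik'
  have hσk : σ k = k' := by
    rw [hσ]
    simp only [Equiv.trans_apply]
    exact Equiv.swap_apply_left _ _
  have := Mom_perm ν z σ i i k k
  rw [hσi, hσk] at this
  exact this.symm

lemma Mom_norm (z : Fin n) : ∑ i, ∑ k, Mom ν z i i k k = 1 := by
  have hpt : ∀ u, ∑ i, ∑ k, mono z i i k k u = 1 := by
    intro u
    simp only [mono]
    rw [← Finset.sum_mul_sum, col_normalized, one_mul]
  have h1 : (∫ u, ∑ i, ∑ k, mono z i i k k u ∂ν) = ∑ i, ∑ k, Mom ν z i i k k := by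
    rw [integral_finset_sum _ (fun i _ => integrable_finset_sum _
      (fun k _ => mono_integrable ν z i i k k))]
    exact Finset.sum_congr rfl fun i _ =>
      integral_finset_sum _ (fun k _ => mono_integrable ν z i i k k)
  rw [← h1, integral_congr_ae (Filter.Eventually.of_forall hpt)]
  simp

lemma Mom_val (hn : 2 ≤ n) (z i j k l : Fin n) :
    Mom ν z i j k l = ((n:ℂ) * n + n)⁻¹ *
      ((if i = j then 1 else 0) * (if k = l then 1 else 0)
        + (if i = l then 1 else 0) * (if j = k then 1 else 0)) := by
  classical
  have h0 : (0 : ℕ) < n := by omega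
  have h1 : (1 : ℕ) < n := by omega
  set p0 : Fin n := ⟨0, h0⟩
  set p1 : Fin n := ⟨1, h1⟩
  have hne : p0 ≠ p1 := by simp [p0, p1, Fin.ext_iff]
  set B := Mom ν z p0 p0 p1 p1 with hB
  have hoff : ∀ {a b : Fin n}, a ≠ b → Mom ν z a a b b = B :=
    fun h => Mom_offdiag_eq ν z h hne
  have hdiag : ∀ a : Fin n, Mom ν z a a a a = 2 * B := fun a => by
    rw [Mom_diag_eq ν z a p0, Mom_rot ν z p0 p1 hne]
  have hrow : ∀ a : Fin n, ∑ b, Mom ν z a a b b = (n:ℂ) * B + B := by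
    intro a
    rw [Finset.sum_congr rfl (fun b _ => show Mom ν z a a b b
        = (if a = b then B else 0) + B from by
      by_cases hab : a = b
      · rw [if_pos hab, hab, hdiag b]; ring
      · rw [if_neg hab, hoff hab, zero_add])]
    rw [Finset.sum_add_distrib, Finset.sum_ite_eq, Finset.sum_const]
    simp [Finset.card_univ, mul_comm]
    ring
  have htot : (n:ℂ) * ((n:ℂ) * B + B) = 1 := by
    have := Mom_norm ν z
    rw [Finset.sum_congr rfl (fun a _ => hrow a), Finset.sum_const] at this
    simp only [Finset.card_univ, Fintype.card_fin, nsmul_eq_mul] at this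
    linear_combination this
  have hBval : B = ((n:ℂ) * n + n)⁻¹ := by
    refine eq_inv_of_mul_eq_one_left ?_
    linear_combination htot
  by_cases hij : i = j
  · subst hij
    by_cases hkl : k = l
    · subst hkl
      by_cases hik : i = k
      · subst hik
        rw [hdiag i, hBval]
        simp
        ring
      · rw [hoff hik, hBval]
        have hik' : i ≠ k := hik
        simp [hik]
    · have hz : Mom ν z i i k l = 0 := Mom_zero ν z _ _ _ _ (by
        rintro (⟨-, h⟩ | ⟨h1, h2⟩)
        · exact hkl h
        · exact hkl (h2.symm.trans h1))
      rw [hz]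
      by_cases hil : i = l
      · have hik : ¬ i = k := fun h => hkl (h.symm.trans hil)
        have hlk : ¬ l = k := fun h => hkl h.symm
        simp [hkl, hil, hik, hlk]
      · simp [hkl, hil]
  · by_cases hil : i = l
    · by_cases hjk : j = k
      · subst hil; subst hjk
        rw [Mom_comm ν z i j, hoff (fun h => hij h), hBval]
        simp [hij]
      · have hz : Mom ν z i j k l = 0 := Mom_zero ν z _ _ _ _ (by
          rintro (⟨h, -⟩ | ⟨-, h⟩)
          · exact hij h
          · exact hjk h)
        rw [hz]
        simp [hij, hjk]
    · have hz : Mom ν z i j k l = 0 := Mom_zero ν z _ _ _ _ (by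
        rintro (⟨h, -⟩ | ⟨h, -⟩)
        · exact hij h
        · exact hil h)
      rw [hz]
      simp [hij, hil]

end Meas2

end Stmt9Aux
end


section Expand
variable {n : ℕ} (𝓡 : AKCT n)

lemma vec_eq_sum (v : Fin n → ℂ) : v = ∑ i, v i • stdVec i := by
  funext m
  rw [Finset.sum_apply]
  simp only [Pi.smul_apply, stdVec, smul_eq_mul, mul_ite, mul_one, mul_zero]
  rw [Finset.sum_ite_eq]
  simp

lemma expand_fst (v w x y : Fin n → ℂ) :
    𝓡.R v w x y = ∑ i, v i * 𝓡.R (stdVec i) w x y := by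
  let L : (Fin n → ℂ) →ₗ[ℂ] ℂ :=
    { toFun := fun X => 𝓡.R X w x y
      map_add' := fun a b => 𝓡.add_fst a b w x y
      map_smul' := fun c X => by simp [RingHom.id_apply, smul_eq_mul, 𝓡.smul_fst] }
  calc 𝓡.R v w x y = L (∑ i, v i • stdVec i) := by rw [← vec_eq_sum]; rfl
    _ = ∑ i, L (v i • stdVec i) := map_sum L _ _
    _ = ∑ i, v i * 𝓡.R (stdVec i) w x y :=
        Finset.sum_congr rfl fun i _ => by simp [L, 𝓡.smul_fst]

lemma expand_snd (v w x y : Fin n → ℂ) :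
    𝓡.R v w x y = ∑ j, (starRingEnd ℂ) (w j) * 𝓡.R v (stdVec j) x y := by
  let L : (Fin n → ℂ) →ₛₗ[starRingEnd ℂ] ℂ :=
    { toFun := fun Y => 𝓡.R v Y x y
      map_add' := fun a b => 𝓡.add_snd v a b x y
      map_smul' := fun c Y => by simp [smul_eq_mul, 𝓡.smul_snd] }
  calc 𝓡.R v w x y = L (∑ j, w j • stdVec j) := by rw [← vec_eq_sum]; rfl
    _ = ∑ j, L (w j • stdVec j) := map_sum L _ _
    _ = ∑ j, (starRingEnd ℂ) (w j) * 𝓡.R v (stdVec j) x y :=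
        Finset.sum_congr rfl fun j _ => by simp [L, 𝓡.smul_snd]

lemma expand_trd (a b x y : Fin n → ℂ) :
    𝓡.R a b x y = ∑ k, x k * 𝓡.R a b (stdVec k) y := by
  rw [𝓡.kahler_symm a b x y, expand_fst]
  exact Finset.sum_congr rfl fun k _ => by rw [𝓡.kahler_symm]

lemma expand_fourth (a b c y : Fin n → ℂ) :
    𝓡.R a b c y = ∑ l, (starRingEnd ℂ) (y l) * 𝓡.R a b c (stdVec l) := by
  rw [𝓡.pair_symm a b c y, expand_snd]
  exact Finset.sum_congr rfl fun l _ => by rw [𝓡.pair_symm]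

lemma expand_R (v w x y : Fin n → ℂ) :
    𝓡.R v w x y = ∑ i, ∑ j, ∑ k, ∑ l,
      (v i * (starRingEnd ℂ) (w j) * (x k * (starRingEnd ℂ) (y l))) *
        𝓡.R (stdVec i) (stdVec j) (stdVec k) (stdVec l) := by
  rw [expand_fst]
  refine Finset.sum_congr rfl fun i _ => ?_
  rw [expand_snd, Finset.mul_sum]
  refine Finset.sum_congr rfl fun j _ => ?_
  rw [expand_trd, Finset.mul_sum, Finset.mul_sum]
  refine Finset.sum_congr rfl fun k _ => ?_
  rw [expand_fourth, Finset.mul_sum, Finset.mul_sum, Finset.mul_sum]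
  refine Finset.sum_congr rfl fun l _ => ?_
  ring

end Expand

open Stmt9Aux MeasureTheory Finset
set_option linter.unusedSectionVars false

/-- Berger-type averaging: the scalar curvature equals
`n(n+1)/2` times the Haar average of the holomorphic sectional curvature of the
first frame vector. -/
theorem stmt9 (n : ℕ) (hn : 2 ≤ n)
    [MeasurableSpace (Matrix.unitaryGroup (Fin n) ℂ)] [BorelSpace (Matrix.unitaryGroup (Fin n) ℂ)]
    (𝓡 : AKCT n)
    (ν : Measure (Matrix.unitaryGroup (Fin n) ℂ))
    [ν.IsMulLeftInvariant] [IsProbabilityMeasure ν] :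
    scalarCurv 𝓡 =
      ((n * (n + 1) : ℝ) / 2) *
        ∫ u, (𝓡.R (uFrame u ⟨0, by omega⟩) (uFrame u ⟨0, by omega⟩) (uFrame u ⟨0, by omega⟩) (uFrame u ⟨0, by omega⟩)).re ∂ν := by
  classical
  have hn0 : 0 < n := by omega
  set z : Fin n := ⟨0, hn0⟩ with hz
  set Rc : Fin n → Fin n → Fin n → Fin n → ℂ :=
    fun i j k l => 𝓡.R (stdVec i) (stdVec j) (stdVec k) (stdVec l) with hRc
  set Sc : ℂ := ∑ i, ∑ k, Rc i i k k with hSc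
  have hpt : ∀ u, 𝓡.R (col z u) (col z u) (col z u) (col z u)
      = ∑ i, ∑ j, ∑ k, ∑ l, mono z i j k l u * Rc i j k l := fun u =>
    expand_R 𝓡 (col z u) (col z u) (col z u) (col z u)
  have hI : ∀ (i j k l : Fin n), Integrable (fun u => mono z i j k l u * Rc i j k l) ν :=
    fun i j k l => (mono_integrable ν z i j k l).mul_const _
  have hint : (∫ u, 𝓡.R (col z u) (col z u) (col z u) (col z u) ∂ν)
      = ∑ i, ∑ j, ∑ k, ∑ l, Mom ν z i j k l * Rc i j k l := by
    rw [integral_congr_ae (Filter.Eventually.of_forall hpt)]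
    rw [integral_finset_sum _ (fun i _ => integrable_finset_sum _ (fun j _ =>
      integrable_finset_sum _ (fun k _ => integrable_finset_sum _ (fun l _ => hI i j k l))))]
    refine Finset.sum_congr rfl fun i _ => ?_
    rw [integral_finset_sum _ (fun j _ =>
      integrable_finset_sum _ (fun k _ => integrable_finset_sum _ (fun l _ => hI i j k l)))]
    refine Finset.sum_congr rfl fun j _ => ?_
    rw [integral_finset_sum _ (fun k _ => integrable_finset_sum _ (fun l _ => hI i j k l))]
    refine Finset.sum_congr rfl fun k _ => ?_
    rw [integral_finset_sum _ (fun l _ => hI i j k l)]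
    exact Finset.sum_congr rfl fun l _ => integral_mul_const _ _
  have hterm : ∀ i j k l : Fin n, Mom ν z i j k l * Rc i j k l =
      (if k = l then (if i = j then ((n:ℂ) * n + n)⁻¹ * Rc i j k l else 0) else 0)
      + (if i = l then (if j = k then ((n:ℂ) * n + n)⁻¹ * Rc i j k l else 0) else 0) := by
    intro i j k l
    rw [Mom_val ν hn z i j k l]
    by_cases h1 : i = j
    · by_cases h2 : k = l
      · by_cases h3 : i = l
        · have h4 : j = k := h1.symm.trans (h3.trans h2.symm)
          simp [h1, h2, h3, h4]
          try ring
        · have h4 : ¬ j = k := fun h => h3 (h1.trans (h.trans h2))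
          have h5 : ¬ j = l := fun h => h3 (h1.trans h)
          simp [h1, h2, h3, h4, h5]
          try ring
      · by_cases h3 : i = l
        · have h4 : ¬ j = k := fun h => h2 (((h1.trans h).symm.trans h3))
          simp [h2, h3, h4]
        · simp [h2, h3]
    · by_cases h2 : k = l
      · by_cases h3 : i = l
        · have h4 : ¬ j = k := fun h => h1 ((h.trans (h2.trans h3.symm)).symm)
          simp [h1, h3, h4]
        · simp [h1, h3]
      · by_cases h3 : i = l
        · by_cases h4 : j = k
          · simp [h1, h2, h3, h4]
            try ring
          · simp [h1, h2, h3, h4]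
        · simp [h1, h2, h3]
  have hval : ∑ i, ∑ j, ∑ k, ∑ l, Mom ν z i j k l * Rc i j k l
      = ((n:ℂ) * n + n)⁻¹ * Sc + ((n:ℂ) * n + n)⁻¹ * Sc := by
    simp only [hterm, Finset.sum_add_distrib, Finset.sum_ite_irrel, Finset.sum_const_zero,
      Finset.sum_ite_eq, Finset.sum_ite_eq', Finset.mem_univ, if_true]
    congr 1
    · rw [hSc, Finset.mul_sum]
      refine Finset.sum_congr rfl fun i _ => ?_
      rw [Finset.mul_sum]
    · rw [hSc, Finset.mul_sum]
      rw [Finset.sum_congr rfl fun i (_ : i ∈ Finset.univ) =>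
        Finset.mul_sum Finset.univ (fun k => Rc i i k k) (((n:ℂ) * n + n)⁻¹)]
      rw [Finset.sum_comm]
      exact Finset.sum_congr rfl fun i _ => Finset.sum_congr rfl fun k _ => by
        rw [show Rc k i i k = Rc i i k k from 𝓡.kahler_symm _ _ _ _]
  have hFint : Integrable (fun u => 𝓡.R (col z u) (col z u) (col z u) (col z u)) ν := by
    rw [show (fun u => 𝓡.R (col z u) (col z u) (col z u) (col z u))
        = (fun u => ∑ i, ∑ j, ∑ k, ∑ l, mono z i j k l u * Rc i j k l) from funext hpt]
    exact integrable_finset_sum _ (fun i _ => integrable_finset_sum _ (fun j _ =>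
      integrable_finset_sum _ (fun k _ => integrable_finset_sum _ (fun l _ => hI i j k l))))
  have hre : (∫ u, (𝓡.R (col z u) (col z u) (col z u) (col z u)).re ∂ν)
      = (∫ u, 𝓡.R (col z u) (col z u) (col z u) (col z u) ∂ν).re := by
    simpa using integral_re hFint
  have hS : scalarCurv 𝓡 = Sc.re := by
    rw [hSc, Complex.re_sum, scalarCurv]
    exact Finset.sum_congr rfl fun i _ => by rw [Complex.re_sum]
  show scalarCurv 𝓡 = ((n * (n + 1) : ℝ) / 2) *
    ∫ u, (𝓡.R (col z u) (col z u) (col z u) (col z u)).re ∂ν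
  rw [hre, hint, hval, hS]
  have hcast : ((n:ℂ) * n + n)⁻¹ = Complex.ofReal (((n:ℝ) * n + n)⁻¹) := by
    push_cast
    ring
  rw [hcast, Complex.add_re, Complex.re_ofReal_mul]
  have h2n : (2:ℝ) ≤ (n:ℝ) := by exact_mod_cast hn
  have hnn : ((n:ℝ) * n + n) ≠ 0 := by nlinarith
  field_simp
  ring

end
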